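/- arXiv:2105.08868 — 2 statements merged into one kernel-verified Lean document; each statement's English description precedes it below -/
import Mathlib

section
/- (Block factorization of the early response indicators.) Under the mth-order Markov model, for every integer k with m + 1 < k ≤ K − m − 1 and all values of the variables, f(R̄_{k−m} | Ȳ_{k−m}, Ōᵐₖ) = ∏_{j=1}^{k−m−1} f(Rⱼ | Ȳ^{m+1}_{j+1}, O̲ᵐⱼ), i.e., the conditional pmf of the block (R₁,…,R_{k−m−1}) given (Y₁,…,Y_{k−m−1}, O_{k−m},…,O_{k−1}) equals the product over j of the conditional pmfs of Rⱼ given (Y_{max(1,j−m)},…,Yⱼ, O_{j+1},…,O_{j+m}), where the O-arguments in each factor are determined by the conditioning values and the other R-entries in the block. -/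
open scoped Classical BigOperators

namespace MRM

/-- Observed datum at index `j`: `some (y j)` if `r j = true` (observed), otherwise `none`
(missing, i.e. the value `?`). -/
def obs {K : ℕ} (y r : Fin K → Bool) (j : Fin K) : Option Bool :=
  if r j then some (y j) else none

/-- Probability of an event under the joint pmf `p` on outcomes and response indicators. -/
noncomputable def Pr {K : ℕ} (p : (Fin K → Bool) → (Fin K → Bool) → ℝ)
    (E : (Fin K → Bool) → (Fin K → Bool) → Prop) : ℝ :=
  ∑ y : Fin K → Bool, ∑ r : Fin K → Bool, if E y r then p y r else 0

/-- Conditional probability `P(A | C)` under `p`. -/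
noncomputable def cPr {K : ℕ} (p : (Fin K → Bool) → (Fin K → Bool) → ℝ)
    (A C : (Fin K → Bool) → (Fin K → Bool) → Prop) : ℝ :=
  Pr p (fun y r => A y r ∧ C y r) / Pr p C

/-- Event: the outcomes at the 1-based positions `lo ≤ pos ≤ hi` take the values `yv pos`.
(If `hi < lo`, or the window is out of range, this is the trivial event, matching the
convention that a vector whose lower index exceeds its upper index is the null vector.) -/
def Yeq {K : ℕ} (lo hi : ℕ) (yv : ℕ → Bool) :
    (Fin K → Bool) → (Fin K → Bool) → Prop :=
  fun y _ => ∀ j : Fin K, lo ≤ j.1 + 1 → j.1 + 1 ≤ hi → y j = yv (j.1 + 1)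

/-- Event: the response indicators at positions `lo ≤ pos ≤ hi` take the values `rv pos`. -/
def Req {K : ℕ} (lo hi : ℕ) (rv : ℕ → Bool) :
    (Fin K → Bool) → (Fin K → Bool) → Prop :=
  fun _ r => ∀ j : Fin K, lo ≤ j.1 + 1 → j.1 + 1 ≤ hi → r j = rv (j.1 + 1)

/-- Event: the observed data at positions `lo ≤ pos ≤ hi` take the values `ov pos`. -/
def Oeq {K : ℕ} (lo hi : ℕ) (ov : ℕ → Option Bool) :
    (Fin K → Bool) → (Fin K → Bool) → Prop :=
  fun y r => ∀ j : Fin K, lo ≤ j.1 + 1 → j.1 + 1 ≤ hi → obs y r j = ov (j.1 + 1)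

/-- The `m`-th order Markov model:
`p(y, r) = ∏ₖ aₖ(yₖ | ȳᵐₖ) · bₖ(rₖ | ȳᵐₖ, yₖ, o̲ᵐₖ)`, where `aₖ` and `bₖ` are strictly
positive conditional pmfs in their first argument, `aₖ` depends only on the outcomes at
1-based positions `max(1, k − m), …, k`, and `bₖ` depends only on `rₖ`, the outcomes at
positions `max(1, k − m), …, k` and the observed data at positions `k + 1, …, min(k + m, K)`.
Indices of `Fin K` are 0-based, so the 1-based paper position of `k : Fin K` is `k.1 + 1`. -/
structure Markov (K m : ℕ) where
  p : (Fin K → Bool) → (Fin K → Bool) → ℝ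
  a : Fin K → (Fin K → Bool) → ℝ
  b : Fin K → (Fin K → Bool) → (Fin K → Bool) → ℝ
  a_pos : ∀ k y, 0 < a k y
  b_pos : ∀ k y r, 0 < b k y r
  a_pmf : ∀ (k : Fin K) (y : Fin K → Bool), ∑ v : Bool, a k (Function.update y k v) = 1
  b_pmf : ∀ (k : Fin K) (y r : Fin K → Bool), ∑ v : Bool, b k y (Function.update r k v) = 1
  a_local : ∀ (k : Fin K) (y y' : Fin K → Bool),
    (∀ j : Fin K, k.1 + 1 - m ≤ j.1 + 1 → j.1 ≤ k.1 → y j = y' j) → a k y = a k y'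
  b_local : ∀ (k : Fin K) (y r y' r' : Fin K → Bool), r k = r' k →
    (∀ j : Fin K, k.1 + 1 - m ≤ j.1 + 1 → j.1 ≤ k.1 → y j = y' j) →
    (∀ j : Fin K, k.1 < j.1 → j.1 + 1 ≤ k.1 + 1 + m → obs y r j = obs y' r' j) →
    b k y r = b k y' r'
  factor : ∀ y r, p y r = ∏ k : Fin K, a k y * b k y r
  sum_one : ∑ y : Fin K → Bool, ∑ r : Fin K → Bool, p y r = 1

/-- Real value of a binary outcome. -/
def yVal (v : Bool) : ℝ := if v then 1 else 0

/-- `cₖ(ȳᵐₖ, o̲ᵐₖ; α) = E[exp(α Yₖ) | Rₖ = 1, Ȳᵐₖ = ȳᵐₖ, O̲ᵐₖ = o̲ᵐₖ]` (`k` is 1-based). -/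
noncomputable def cfun {K : ℕ} (p : (Fin K → Bool) → (Fin K → Bool) → ℝ) (m : ℕ) (α : ℝ)
    (k : ℕ) (yv : ℕ → Bool) (ov : ℕ → Option Bool) : ℝ :=
  ∑ v : Bool, Real.exp (α * yVal v) *
    cPr p (Yeq k k (fun _ => v))
      (fun y r => Req k k (fun _ => true) y r ∧ Yeq (k - m) (k - 1) yv y r ∧
        Oeq (k + 1) (k + m) ov y r)

/-- The exponential tilting restriction with sensitivity parameters `α k` (`k` is 1-based):
`f(Yₖ | Rₖ = 0, Ȳᵐₖ, O̲ᵐₖ) = f(Yₖ | Rₖ = 1, Ȳᵐₖ, O̲ᵐₖ) · exp(αₖ Yₖ) / cₖ(Ȳᵐₖ, O̲ᵐₖ; αₖ)`. -/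
def Tilt {K : ℕ} (p : (Fin K → Bool) → (Fin K → Bool) → ℝ) (m : ℕ) (α : ℕ → ℝ) : Prop :=
  ∀ (k : ℕ), 1 ≤ k → k ≤ K → ∀ (yv : ℕ → Bool) (ov : ℕ → Option Bool),
    cPr p (Yeq k k yv)
      (fun y r => Req k k (fun _ => false) y r ∧ Yeq (k - m) (k - 1) yv y r ∧
        Oeq (k + 1) (k + m) ov y r)
    = cPr p (Yeq k k yv)
        (fun y r => Req k k (fun _ => true) y r ∧ Yeq (k - m) (k - 1) yv y r ∧
          Oeq (k + 1) (k + m) ov y r)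
      * Real.exp (α k * yVal (yv k)) / cfun p m (α k) k yv ov


namespace S14

/-! ### Summation machinery over the Boolean cube -/

variable {K : ℕ}

/-- Sum of `f` over all points agreeing with `x` off the list `l`. -/
def SS : List (Fin K) → (Fin K → Bool) → ((Fin K → Bool) → ℝ) → ℝ
  | [], x, f => f x
  | i :: l, x, f => ∑ v : Bool, SS l (Function.update x i v) f

lemma SS_nil (x : Fin K → Bool) (f : (Fin K → Bool) → ℝ) : SS [] x f = f x := rfl

lemma SS_cons (i : Fin K) (l : List (Fin K)) (x : Fin K → Bool) (f : (Fin K → Bool) → ℝ) :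
    SS (i :: l) x f = ∑ v : Bool, SS l (Function.update x i v) f := rfl

lemma SS_bridge : ∀ (l : List (Fin K)), l.Nodup → ∀ (x : Fin K → Bool) (f : (Fin K → Bool) → ℝ),
    SS l x f = ∑ r : Fin K → Bool, if (∀ i, i ∉ l → r i = x i) then f r else 0 := by
  intro l
  induction l with
  | nil =>
    intro _ x f
    have h : ∀ r : Fin K → Bool, (∀ i, i ∉ ([] : List (Fin K)) → r i = x i) ↔ r = x := by
      intro r
      constructor
      · intro h; funext i; exact h i List.not_mem_nil
      · intro h i _; rw [h]
    simp only [h]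
    rw [Finset.sum_ite_eq' Finset.univ x f]
    simp [SS]
  | cons i l ih =>
    intro hnd x f
    have hi : i ∉ l := (List.nodup_cons.mp hnd).1
    have hln : l.Nodup := (List.nodup_cons.mp hnd).2
    rw [SS_cons]
    have key : ∀ (v : Bool) (r : Fin K → Bool),
        (∀ j, j ∉ l → r j = Function.update x i v j) ↔
          (r i = v ∧ ∀ j, j ∉ i :: l → r j = x j) := by
      intro v r
      constructor
      · intro h
        constructor
        · have := h i hi; rwa [Function.update_self] at this
        · intro j hj
          have hj' : j ≠ i ∧ j ∉ l := by
            constructor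
            · intro he; exact hj (he ▸ List.mem_cons_self)
            · intro he; exact hj (List.mem_cons_of_mem i he)
          have := h j hj'.2
          rwa [Function.update_of_ne hj'.1] at this
      · rintro ⟨h1, h2⟩ j hj
        by_cases hji : j = i
        · subst hji; rwa [Function.update_self]
        · rw [Function.update_of_ne hji]
          exact h2 j (by simp [List.mem_cons, hji, hj])
    calc ∑ v : Bool, SS l (Function.update x i v) f
        = ∑ v : Bool, ∑ r : Fin K → Bool,
            if (∀ j, j ∉ l → r j = Function.update x i v j) then f r else 0 := by
          refine Finset.sum_congr rfl fun v _ => ?_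
          exact ih hln (Function.update x i v) f
      _ = ∑ r : Fin K → Bool, ∑ v : Bool,
            if (r i = v ∧ ∀ j, j ∉ i :: l → r j = x j) then f r else 0 := by
          rw [Finset.sum_comm]
          exact Finset.sum_congr rfl fun r _ => Finset.sum_congr rfl fun v _ => by
            rw [if_congr (key v r) rfl rfl]
      _ = ∑ r : Fin K → Bool, if (∀ j, j ∉ i :: l → r j = x j) then f r else 0 := by
          refine Finset.sum_congr rfl fun r _ => ?_
          rw [Fintype.sum_bool]
          by_cases h : (∀ j, j ∉ i :: l → r j = x j) <;> cases hri : r i <;> simp [h, hri]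

lemma SS_congr_f (l : List (Fin K)) :
    ∀ (x : Fin K → Bool) (f g : (Fin K → Bool) → ℝ),
    (∀ z, (∀ i, i ∉ l → z i = x i) → f z = g z) → SS l x f = SS l x g := by
  induction l with
  | nil =>
    intro x f g h
    exact h x fun i _ => rfl
  | cons i l ih =>
    intro x f g h
    rw [SS_cons, SS_cons]
    refine Finset.sum_congr rfl fun v _ => ?_
    refine ih _ _ _ fun z hz => h z fun j hj => ?_
    have hji : j ≠ i := fun he => hj (he ▸ List.mem_cons_self)
    have := hz j (fun he => hj (List.mem_cons_of_mem i he))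
    rwa [Function.update_of_ne hji] at this

lemma SS_congr_mem (l l' : List (Fin K)) (hl : l.Nodup) (hl' : l'.Nodup)
    (hmem : ∀ i, i ∈ l ↔ i ∈ l') (x x' : Fin K → Bool)
    (hx : ∀ i, i ∉ l → x i = x' i) (f : (Fin K → Bool) → ℝ) :
    SS l x f = SS l' x' f := by
  rw [SS_bridge l hl, SS_bridge l' hl']
  refine Finset.sum_congr rfl fun r _ => ?_
  have : (∀ i, i ∉ l → r i = x i) ↔ (∀ i, i ∉ l' → r i = x' i) := by
    constructor
    · intro h i hi
      have hi' : i ∉ l := fun hh => hi ((hmem i).mp hh)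
      rw [h i hi', hx i hi']
    · intro h i hi
      rw [h i (fun hh => hi ((hmem i).mpr hh)), ← hx i hi]
  rw [if_congr this rfl rfl]

lemma SS_mul_left (l : List (Fin K)) :
    ∀ (x : Fin K → Bool) (c : ℝ) (f : (Fin K → Bool) → ℝ),
    SS l x (fun z => c * f z) = c * SS l x f := by
  induction l with
  | nil => intro x c f; rfl
  | cons i l ih =>
    intro x c f
    rw [SS_cons, SS_cons, Finset.mul_sum]
    exact Finset.sum_congr rfl fun v _ => ih _ c f

lemma SS_pos (l : List (Fin K)) :
    ∀ (x : Fin K → Bool) (f : (Fin K → Bool) → ℝ), (∀ z, 0 < f z) → 0 < SS l x f := by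
  induction l with
  | nil => intro x f h; exact h x
  | cons i l ih =>
    intro x f h
    rw [SS_cons]
    exact Finset.sum_pos (fun v _ => ih _ f h) ⟨true, Finset.mem_univ _⟩

lemma SS_append (l₁ l₂ : List (Fin K)) :
    ∀ (x : Fin K → Bool) (f : (Fin K → Bool) → ℝ),
    SS (l₁ ++ l₂) x f = SS l₁ x (fun z => SS l₂ z f) := by
  induction l₁ with
  | nil => intro x f; rfl
  | cons i l ih =>
    intro x f
    rw [List.cons_append, SS_cons, SS_cons]
    exact Finset.sum_congr rfl fun v _ => ih _ f

lemma SS_append_singleton (l : List (Fin K)) (i : Fin K) :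
    ∀ (x : Fin K → Bool) (f : (Fin K → Bool) → ℝ),
    SS (l ++ [i]) x f = SS l x (fun z => ∑ v : Bool, f (Function.update z i v)) := by
  induction l with
  | nil => intro x f; rfl
  | cons j l ih =>
    intro x f
    rw [List.cons_append, SS_cons, SS_cons]
    exact Finset.sum_congr rfl fun v _ => ih _ f

/-- The list of indices satisfying `P` (the "free" coordinates). -/
noncomputable def Lfree (P : Fin K → Prop) : List (Fin K) :=
  (List.finRange K).filter (fun i => decide (P i))

lemma mem_Lfree (P : Fin K → Prop) (i : Fin K) : i ∈ Lfree P ↔ P i := by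
  simp [Lfree]

lemma nodup_Lfree (P : Fin K → Prop) : (Lfree P).Nodup :=
  (List.nodup_finRange K).filter _

noncomputable def freeIcc (lo c : ℕ) : List (Fin K) := Lfree (fun i => lo ≤ i.1 ∧ i.1 < c)

lemma mem_freeIcc (lo c : ℕ) (i : Fin K) : i ∈ freeIcc lo c ↔ lo ≤ i.1 ∧ i.1 < c :=
  mem_Lfree _ i

lemma nodup_freeIcc (lo c : ℕ) : (freeIcc (K := K) lo c).Nodup := nodup_Lfree _

lemma Pr_eq_SS (p : (Fin K → Bool) → (Fin K → Bool) → ℝ)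
    (E : (Fin K → Bool) → (Fin K → Bool) → Prop)
    (ly lr : List (Fin K)) (hly : ly.Nodup) (hlr : lr.Nodup)
    (y₀ x₀ : Fin K → Bool)
    (hE : ∀ y r, E y r ↔ ((∀ i, i ∉ ly → y i = y₀ i) ∧ (∀ i, i ∉ lr → r i = x₀ i))) :
    Pr p E = SS ly y₀ (fun y => SS lr x₀ (fun r => p y r)) := by
  rw [SS_bridge ly hly]
  unfold Pr
  refine Finset.sum_congr rfl fun y _ => ?_
  by_cases hy : ∀ i, i ∉ ly → y i = y₀ i
  · rw [if_pos hy, SS_bridge lr hlr]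
    refine Finset.sum_congr rfl fun r _ => ?_
    have : E y r ↔ (∀ i, i ∉ lr → r i = x₀ i) := by
      rw [hE]; exact ⟨fun h => h.2, fun h => ⟨hy, h⟩⟩
    rw [if_congr this rfl rfl]
  · rw [if_neg hy]
    refine Finset.sum_eq_zero fun r _ => ?_
    rw [if_neg]
    rw [hE]
    intro hc
    exact hy hc.1

lemma obs_congr {y r y' r' : Fin K → Bool} {j : Fin K}
    (h1 : r j = r' j) (h2 : r' j = true → y j = y' j) : obs y r j = obs y' r' j := by
  unfold obs
  rw [h1]
  cases hc : r' j with
  | false => simp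
  | true => simp [h2 hc]

lemma obs_eq_iff {y r y' r' : Fin K → Bool} (i : Fin K) :
    obs y r i = obs y' r' i ↔ (r i = r' i ∧ (r' i = true → y i = y' i)) := by
  unfold obs
  cases h1 : r i <;> cases h2 : r' i <;> simp

/-! ### The telescoping (pmf) lemma and the core computation -/

variable {m : ℕ}

lemma tele (M : Markov K m) (y : Fin K → Bool) :
    ∀ (n lo : ℕ) (x : Fin K → Bool), lo + n ≤ K →
      SS (freeIcc lo (lo + n)) x
        (fun z => ∏ l ∈ Finset.univ.filter (fun l : Fin K => lo ≤ l.1 ∧ l.1 < lo + n),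
          M.b l y z) = 1 := by
  intro n
  induction n with
  | zero =>
    intro lo x _
    have hmem : ∀ i : Fin K, i ∈ freeIcc lo (lo + 0) ↔ i ∈ ([] : List (Fin K)) := by
      intro i; simp [mem_freeIcc]; try omega
    rw [SS_congr_mem _ [] (nodup_freeIcc _ _) List.nodup_nil hmem x x (fun _ _ => rfl), SS_nil]
    have he : Finset.univ.filter (fun l : Fin K => lo ≤ l.1 ∧ l.1 < lo + 0) = ∅ := by
      ext l; simp; try omega
    rw [he, Finset.prod_empty]
  | succ n ih =>
    intro lo x h
    have hloK : lo < K := by omega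
    set i₀ : Fin K := ⟨lo, hloK⟩ with hi₀
    have hmem : ∀ i : Fin K,
        i ∈ freeIcc lo (lo + (n+1)) ↔ i ∈ freeIcc (lo+1) (lo + (n+1)) ++ [i₀] := by
      intro i
      simp only [mem_freeIcc, List.mem_append, List.mem_singleton, Fin.ext_iff, hi₀]
      omega
    have hnd : (freeIcc (K := K) (lo+1) (lo + (n+1)) ++ [i₀]).Nodup := by
      refine List.Nodup.append (nodup_freeIcc _ _) (List.nodup_singleton _) ?_
      intro a ha hb
      rw [mem_freeIcc] at ha
      rw [List.mem_singleton] at hb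
      subst hb
      simp [hi₀] at ha
      try omega
    rw [SS_congr_mem _ _ (nodup_freeIcc _ _) hnd hmem x x (fun _ _ => rfl),
      SS_append_singleton]
    have key : (fun z : Fin K → Bool => ∑ v : Bool,
          ∏ l ∈ Finset.univ.filter (fun l : Fin K => lo ≤ l.1 ∧ l.1 < lo + (n+1)),
            M.b l y (Function.update z i₀ v))
        = fun z => ∏ l ∈ Finset.univ.filter (fun l : Fin K => lo + 1 ≤ l.1 ∧ l.1 < lo + (n+1)),
            M.b l y z := by
      funext z
      have hsplit : Finset.univ.filter (fun l : Fin K => lo ≤ l.1 ∧ l.1 < lo + (n+1))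
          = insert i₀ (Finset.univ.filter
              (fun l : Fin K => lo + 1 ≤ l.1 ∧ l.1 < lo + (n+1))) := by
        ext l
        simp [Fin.ext_iff, hi₀]
        omega
      have hnotmem : i₀ ∉ Finset.univ.filter
          (fun l : Fin K => lo + 1 ≤ l.1 ∧ l.1 < lo + (n+1)) := by
        simp [hi₀]
      have hconst : ∀ v : Bool, ∀ l ∈ Finset.univ.filter
          (fun l : Fin K => lo + 1 ≤ l.1 ∧ l.1 < lo + (n+1)),
          M.b l y (Function.update z i₀ v) = M.b l y z := by
        intro v l hl
        rw [Finset.mem_filter] at hl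
        have hne : l ≠ i₀ := by
          intro he; rw [he] at hl; simp [hi₀] at hl
        refine M.b_local l y _ y z ?_ (fun _ _ _ => rfl) ?_
        · exact Function.update_of_ne hne _ _
        · intro j hj _
          have hjne : j ≠ i₀ := by
            intro he
            rw [he] at hj
            simp [hi₀] at hj
            omega
          unfold obs
          rw [Function.update_of_ne hjne]
      calc (∑ v : Bool, ∏ l ∈ Finset.univ.filter
              (fun l : Fin K => lo ≤ l.1 ∧ l.1 < lo + (n+1)),
              M.b l y (Function.update z i₀ v))
          = ∑ v : Bool, M.b i₀ y (Function.update z i₀ v) *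
              ∏ l ∈ Finset.univ.filter (fun l : Fin K => lo + 1 ≤ l.1 ∧ l.1 < lo + (n+1)),
                M.b l y z := by
            refine Finset.sum_congr rfl fun v _ => ?_
            rw [hsplit, Finset.prod_insert hnotmem]
            exact congrArg _ (Finset.prod_congr rfl (hconst v))
        _ = (∑ v : Bool, M.b i₀ y (Function.update z i₀ v)) *
              ∏ l ∈ Finset.univ.filter (fun l : Fin K => lo + 1 ≤ l.1 ∧ l.1 < lo + (n+1)),
                M.b l y z := by rw [Finset.sum_mul]
        _ = _ := by rw [M.b_pmf i₀ y z, one_mul]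
    rw [key]
    have e : lo + (n + 1) = (lo + 1) + n := by omega
    rw [e]
    exact ih (lo + 1) x (by omega)

lemma prod_split3 (c d : ℕ) (hd : d ≤ c) (F : Fin K → ℝ) :
    ∏ l : Fin K, F l =
      (∏ l ∈ Finset.univ.filter (fun l : Fin K => 0 ≤ l.1 ∧ l.1 < d), F l) *
      ((∏ l ∈ Finset.univ.filter (fun l : Fin K => d ≤ l.1 ∧ l.1 < c), F l) *
       (∏ l ∈ Finset.univ.filter (fun l : Fin K => c ≤ l.1), F l)) := by
  rw [← Finset.prod_filter_mul_prod_filter_not Finset.univ (fun l : Fin K => l.1 < d) F]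
  rw [← Finset.prod_filter_mul_prod_filter_not
    (Finset.univ.filter (fun l : Fin K => ¬ l.1 < d)) (fun l : Fin K => l.1 < c) F]
  congr 1
  · apply Finset.prod_congr _ (fun _ _ => rfl)
    ext l; simp
  congr 1
  · apply Finset.prod_congr _ (fun _ _ => rfl)
    rw [Finset.filter_filter]
    ext l; simp; try omega
  · apply Finset.prod_congr _ (fun _ _ => rfl)
    rw [Finset.filter_filter]
    ext l; simp; try omega

/-- The core computation: conditioning on the outcomes/observations near the block and
summing out everything else, the joint probability factorizes with the block response
factors pulled out as constants. -/
lemma core (M : Markov K m) (y₀ x : Fin K → Bool) (c d : ℕ) (hd : d ≤ c) (hcm : c + m ≤ K)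
    (ly : List (Fin K))
    (Ha : ∀ i : Fin K, i.1 < c → d ≤ i.1 + m → i ∉ ly)
    (Hb : ∀ i : Fin K, c ≤ i.1 → i.1 < c + m → x i = true → i ∉ ly) :
    SS ly y₀ (fun y => SS (Lfree (fun i : Fin K => c + m ≤ i.1) ++ freeIcc 0 d) x
        (fun r => M.p y r))
      = (∏ l ∈ Finset.univ.filter (fun l : Fin K => d ≤ l.1 ∧ l.1 < c), M.b l y₀ x) *
        SS ly y₀ (fun y => (∏ l : Fin K, M.a l y) *
          SS (Lfree (fun i : Fin K => c + m ≤ i.1)) x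
            (fun r => ∏ l ∈ Finset.univ.filter (fun l : Fin K => c ≤ l.1), M.b l y r)) := by
  set B : ℝ := ∏ l ∈ Finset.univ.filter (fun l : Fin K => d ≤ l.1 ∧ l.1 < c), M.b l y₀ x
    with hB
  rw [← SS_mul_left ly y₀ B]
  refine SS_congr_f ly y₀ _ _ fun y hy => ?_
  rw [SS_append]
  have Astep : SS (Lfree (fun i : Fin K => c + m ≤ i.1)) x
      (fun r' => SS (freeIcc 0 d) r' (fun r => M.p y r))
      = SS (Lfree (fun i : Fin K => c + m ≤ i.1)) x
        (fun r' => (B * (∏ l : Fin K, M.a l y)) *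
          (∏ l ∈ Finset.univ.filter (fun l : Fin K => c ≤ l.1), M.b l y r')) := by
    refine SS_congr_f _ x _ _ fun r' hr' => ?_
    have hP : ∀ r : Fin K → Bool, (∀ i, i ∉ freeIcc 0 d → r i = r' i) →
        M.p y r = ((B * (∏ l : Fin K, M.a l y)) *
            (∏ l ∈ Finset.univ.filter (fun l : Fin K => c ≤ l.1), M.b l y r')) *
          (∏ l ∈ Finset.univ.filter (fun l : Fin K => 0 ≤ l.1 ∧ l.1 < d), M.b l y r) := by
      intro r hr
      have hrx : ∀ j : Fin K, d ≤ j.1 → j.1 < c + m → r j = x j := by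
        intro j h1 h2
        have h3 : j ∉ freeIcc 0 d := by rw [mem_freeIcc]; omega
        have h4 : j ∉ Lfree (fun i : Fin K => c + m ≤ i.1) := by rw [mem_Lfree]; omega
        rw [hr j h3, hr' j h4]
      have hrr' : ∀ j : Fin K, d ≤ j.1 → r j = r' j := by
        intro j h1
        have h3 : j ∉ freeIcc 0 d := by rw [mem_freeIcc]; omega
        exact hr j h3
      have hyy₀ : ∀ j : Fin K, j.1 < c → d ≤ j.1 + m → y j = y₀ j :=
        fun j h1 h2 => hy j (Ha j h1 h2)
      have hmid : ∏ l ∈ Finset.univ.filter (fun l : Fin K => d ≤ l.1 ∧ l.1 < c), M.b l y r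
          = B := by
        rw [hB]
        refine Finset.prod_congr rfl fun l hl => ?_
        rw [Finset.mem_filter] at hl
        obtain ⟨-, hl1, hl2⟩ := hl
        refine M.b_local l y r y₀ x ?_ ?_ ?_
        · exact hrx l hl1 (by omega)
        · intro j hj1 hj2
          exact hyy₀ j (by omega) (by omega)
        · intro j hj1 hj2
          refine obs_congr (hrx j (by omega) (by omega)) fun hxj => ?_
          by_cases hc2 : j.1 < c
          · exact hy j (Ha j hc2 (by omega))
          · exact hy j (Hb j (by omega) (by omega) hxj)
      have htail : ∏ l ∈ Finset.univ.filter (fun l : Fin K => c ≤ l.1), M.b l y r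
          = ∏ l ∈ Finset.univ.filter (fun l : Fin K => c ≤ l.1), M.b l y r' := by
        refine Finset.prod_congr rfl fun l hl => ?_
        rw [Finset.mem_filter] at hl
        refine M.b_local l y r y r' ?_ (fun _ _ _ => rfl) ?_
        · exact hrr' l (by omega)
        · intro j hj1 _
          exact obs_congr (hrr' j (by omega)) fun _ => rfl
      rw [M.factor y r, Finset.prod_mul_distrib, prod_split3 c d hd (fun l => M.b l y r),
        hmid, htail]
      ring
    rw [SS_congr_f _ _ _ _ hP, SS_mul_left]
    have ht := tele M y d 0 r' (by omega)
    simp only [Nat.zero_add] at ht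
    rw [ht, mul_one]
  rw [Astep, SS_mul_left]
  ring

/-! ### The canonical point realizing the conditioning -/

/-- Canonical outcome vector: `yv` inside the block, values decoded from `ov` afterwards. -/
def Ystar (k m : ℕ) (yv : ℕ → Bool) (ov : ℕ → Option Bool) : Fin K → Bool :=
  fun i => if i.1 + 1 < k - m then yv (i.1 + 1) else (ov (i.1 + 1)).getD false

/-- Canonical response vector: `rv` inside the block, observedness from `ov` afterwards. -/
def Rstar (k m : ℕ) (rv : ℕ → Bool) (ov : ℕ → Option Bool) : Fin K → Bool :=
  fun i => if i.1 + 1 < k - m then rv (i.1 + 1) else (ov (i.1 + 1)).isSome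


/-! ### The two sides of Statement 14 -/

lemma lhs_eq (M : Markov K m) (hm : 1 ≤ m) (hKm : 2 * m + 1 < K)
    (k : ℕ) (hk1 : m + 1 < k) (hk2 : k ≤ K - m - 1)
    (yv rv : ℕ → Bool) (ov : ℕ → Option Bool) :
    cPr M.p (Req 1 (k - m - 1) rv)
        (fun y r => Yeq 1 (k - m - 1) yv y r ∧ Oeq (k - m) (k - 1) ov y r)
      = ∏ l ∈ Finset.univ.filter (fun l : Fin K => 0 ≤ l.1 ∧ l.1 < k - m - 1),
          M.b l (Ystar k m yv ov) (Rstar k m rv ov) := by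
  set t := k - m - 1 with ht
  set Y : Fin K → Bool := Ystar k m yv ov with hYdef
  set R : Fin K → Bool := Rstar k m rv ov with hRdef
  have hYlt : ∀ i : Fin K, i.1 < t → Y i = yv (i.1 + 1) := by
    intro i h; rw [hYdef]; simp only [Ystar]; rw [if_pos (by omega)]
  have hYge : ∀ i : Fin K, t ≤ i.1 → Y i = (ov (i.1 + 1)).getD false := by
    intro i h; rw [hYdef]; simp only [Ystar]; rw [if_neg (by omega)]
  have hRlt : ∀ i : Fin K, i.1 < t → R i = rv (i.1 + 1) := by
    intro i h; rw [hRdef]; simp only [Rstar]; rw [if_pos (by omega)]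
  have hRge : ∀ i : Fin K, t ≤ i.1 → R i = (ov (i.1 + 1)).isSome := by
    intro i h; rw [hRdef]; simp only [Rstar]; rw [if_neg (by omega)]
  have hobs_star : ∀ i : Fin K, t ≤ i.1 → obs Y R i = ov (i.1 + 1) := by
    intro i h
    unfold obs
    rw [hRge i h, hYge i h]
    cases hov : ov (i.1 + 1) <;> simp [hov]
  set ly : List (Fin K) := Lfree (fun i : Fin K =>
    ¬(i.1 < t ∨ (i.1 < t + m ∧ (ov (i.1 + 1)).isSome = true))) with hlydef
  have hmly : ∀ i : Fin K, i ∉ ly ↔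
      (i.1 < t ∨ (i.1 < t + m ∧ (ov (i.1 + 1)).isSome = true)) := by
    intro i; rw [hlydef, mem_Lfree, not_not]
  set lrN : List (Fin K) := Lfree (fun i : Fin K => t + m ≤ i.1) ++ freeIcc 0 0 with hlrNdef
  set lrD : List (Fin K) := Lfree (fun i : Fin K => t + m ≤ i.1) ++ freeIcc 0 t with hlrDdef
  have hmlrN : ∀ i : Fin K, i ∉ lrN ↔ i.1 < t + m := by
    intro i; rw [hlrNdef]; simp [List.mem_append, mem_Lfree, mem_freeIcc]; try omega
  have hmlrD : ∀ i : Fin K, i ∉ lrD ↔ (t ≤ i.1 ∧ i.1 < t + m) := by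
    intro i; rw [hlrDdef]; simp [List.mem_append, mem_Lfree, mem_freeIcc]; omega
  have ndlrN : lrN.Nodup := by
    rw [hlrNdef]
    refine List.Nodup.append (nodup_Lfree _) (nodup_freeIcc _ _) ?_
    intro a ha hb; rw [mem_Lfree] at ha; rw [mem_freeIcc] at hb; omega
  have ndlrD : lrD.Nodup := by
    rw [hlrDdef]
    refine List.Nodup.append (nodup_Lfree _) (nodup_freeIcc _ _) ?_
    intro a ha hb; rw [mem_Lfree] at ha; rw [mem_freeIcc] at hb; omega
  -- decoding of the events into coordinate constraints
  have hEnum : ∀ y r : Fin K → Bool,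
      (Req 1 t rv y r ∧ (Yeq 1 t yv y r ∧ Oeq (k - m) (k - 1) ov y r)) ↔
      ((∀ i, i ∉ ly → y i = Y i) ∧ (∀ i, i ∉ lrN → r i = R i)) := by
    intro y r
    constructor
    · rintro ⟨h1, h2, h3⟩
      constructor
      · intro i hi
        by_cases hlt : i.1 < t
        · rw [h2 i (by omega) (by omega), hYlt i hlt]
        · rcases (hmly i).mp hi with hc | ⟨hc2, hsome⟩
          · omega
          · have h4 := h3 i (by omega) (by omega)
            rw [← hobs_star i (by omega)] at h4
            exact ((obs_eq_iff i).mp h4).2 (by rw [hRge i (by omega)]; exact hsome)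
      · intro i hi
        have hi' := (hmlrN i).mp hi
        by_cases hlt : i.1 < t
        · rw [h1 i (by omega) (by omega), hRlt i hlt]
        · have h4 := h3 i (by omega) (by omega)
          rw [← hobs_star i (by omega)] at h4
          exact ((obs_eq_iff i).mp h4).1
    · rintro ⟨hYc, hRc⟩
      refine ⟨?_, ?_, ?_⟩
      · intro i _ h2
        rw [hRc i ((hmlrN i).mpr (by omega)), hRlt i (by omega)]
      · intro i _ h2
        rw [hYc i ((hmly i).mpr (Or.inl (by omega))), hYlt i (by omega)]
      · intro i h1 h2
        rw [← hobs_star i (by omega)]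
        refine (obs_eq_iff i).mpr ⟨hRc i ((hmlrN i).mpr (by omega)), fun hRt => ?_⟩
        refine hYc i ((hmly i).mpr (Or.inr ⟨by omega, ?_⟩))
        rw [← hRge i (by omega)]; exact hRt
  have hEden : ∀ y r : Fin K → Bool,
      (Yeq 1 t yv y r ∧ Oeq (k - m) (k - 1) ov y r) ↔
      ((∀ i, i ∉ ly → y i = Y i) ∧ (∀ i, i ∉ lrD → r i = R i)) := by
    intro y r
    constructor
    · rintro ⟨h2, h3⟩
      constructor
      · intro i hi
        by_cases hlt : i.1 < t
        · rw [h2 i (by omega) (by omega), hYlt i hlt]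
        · rcases (hmly i).mp hi with hc | ⟨hc2, hsome⟩
          · omega
          · have h4 := h3 i (by omega) (by omega)
            rw [← hobs_star i (by omega)] at h4
            exact ((obs_eq_iff i).mp h4).2 (by rw [hRge i (by omega)]; exact hsome)
      · intro i hi
        have hi' := (hmlrD i).mp hi
        have h4 := h3 i (by omega) (by omega)
        rw [← hobs_star i (by omega)] at h4
        exact ((obs_eq_iff i).mp h4).1
    · rintro ⟨hYc, hRc⟩
      refine ⟨?_, ?_⟩
      · intro i _ h2
        rw [hYc i ((hmly i).mpr (Or.inl (by omega))), hYlt i (by omega)]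
      · intro i h1 h2
        rw [← hobs_star i (by omega)]
        refine (obs_eq_iff i).mpr ⟨hRc i ((hmlrD i).mpr (by omega)), fun hRt => ?_⟩
        refine hYc i ((hmly i).mpr (Or.inr ⟨by omega, ?_⟩))
        rw [← hRge i (by omega)]; exact hRt
  have hnum := Pr_eq_SS M.p _ ly lrN (by rw [hlydef]; exact nodup_Lfree _) ndlrN Y R hEnum
  have hden := Pr_eq_SS M.p _ ly lrD (by rw [hlydef]; exact nodup_Lfree _) ndlrD Y R hEden
  have HaN : ∀ i : Fin K, i.1 < t → (0 : ℕ) ≤ i.1 + m → i ∉ ly :=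
    fun i h _ => (hmly i).mpr (Or.inl h)
  have HaD : ∀ i : Fin K, i.1 < t → t ≤ i.1 + m → i ∉ ly :=
    fun i h _ => (hmly i).mpr (Or.inl h)
  have Hb : ∀ i : Fin K, t ≤ i.1 → i.1 < t + m → R i = true → i ∉ ly := by
    intro i h1 h2 h3
    refine (hmly i).mpr (Or.inr ⟨h2, ?_⟩)
    rw [← hRge i h1]; exact h3
  have hc1 := core M Y R t 0 (by omega) (by omega) ly HaN Hb
  have hc2 := core M Y R t t le_rfl (by omega) ly HaD Hb
  rw [show cPr M.p (Req 1 t rv)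
        (fun y r => Yeq 1 t yv y r ∧ Oeq (k - m) (k - 1) ov y r)
      = Pr M.p (fun y r => Req 1 t rv y r ∧ (Yeq 1 t yv y r ∧ Oeq (k - m) (k - 1) ov y r)) /
        Pr M.p (fun y r => Yeq 1 t yv y r ∧ Oeq (k - m) (k - 1) ov y r) from rfl]
  rw [hnum, hden, hlrNdef, hlrDdef, hc1, hc2]
  have hemp : Finset.univ.filter (fun l : Fin K => t ≤ l.1 ∧ l.1 < t) = ∅ := by
    ext l; simp; try omega
  rw [hemp, Finset.prod_empty, one_mul, mul_div_assoc, div_self, mul_one]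
  refine ne_of_gt (SS_pos _ _ _ fun y => mul_pos (Finset.prod_pos fun l _ => M.a_pos l y)
    (SS_pos _ _ _ fun r => Finset.prod_pos fun l _ => M.b_pos l y r))

lemma rhs_eq (M : Markov K m) (hm : 1 ≤ m) (hKm : 2 * m + 1 < K)
    (k : ℕ) (hk1 : m + 1 < k) (hk2 : k ≤ K - m - 1)
    (yv rv : ℕ → Bool) (ov : ℕ → Option Bool)
    (j : ℕ) (l0 : Fin K) (hl0 : l0.1 + 1 = j) (hj2 : j ≤ k - m - 1) :
    cPr M.p (Req j j rv)
      (fun y r => Yeq (j - m) j yv y r ∧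
        Oeq (j + 1) (j + m)
          (fun n => if k - m ≤ n then ov n else if rv n then some (yv n) else none) y r)
    = M.b l0 (Ystar k m yv ov) (Rstar k m rv ov) := by
  set OV : ℕ → Option Bool :=
    fun n => if k - m ≤ n then ov n else if rv n then some (yv n) else none with hOV
  set t := k - m - 1 with ht
  have hj1 : 1 ≤ j := by omega
  set Y : Fin K → Bool := Ystar k m yv ov with hYdef
  set R : Fin K → Bool := Rstar k m rv ov with hRdef
  have hYlt : ∀ i : Fin K, i.1 < t → Y i = yv (i.1 + 1) := by
    intro i h; rw [hYdef]; simp only [Ystar]; rw [if_pos (by omega)]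
  have hYge : ∀ i : Fin K, t ≤ i.1 → Y i = (ov (i.1 + 1)).getD false := by
    intro i h; rw [hYdef]; simp only [Ystar]; rw [if_neg (by omega)]
  have hRlt : ∀ i : Fin K, i.1 < t → R i = rv (i.1 + 1) := by
    intro i h; rw [hRdef]; simp only [Rstar]; rw [if_pos (by omega)]
  have hRge : ∀ i : Fin K, t ≤ i.1 → R i = (ov (i.1 + 1)).isSome := by
    intro i h; rw [hRdef]; simp only [Rstar]; rw [if_neg (by omega)]
  have hobsOV : ∀ i : Fin K, i.1 < t + m → obs Y R i = OV (i.1 + 1) := by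
    intro i h
    simp only [hOV]
    by_cases hlt : i.1 < t
    · rw [if_neg (show ¬ k - m ≤ i.1 + 1 by omega)]
      unfold obs
      rw [hRlt i hlt, hYlt i hlt]
    · rw [if_pos (by omega)]
      unfold obs
      rw [hRge i (by omega), hYge i (by omega)]
      cases hov : ov (i.1 + 1) <;> simp [hov]
  have hRiso : ∀ i : Fin K, i.1 < t + m → R i = (OV (i.1 + 1)).isSome := by
    intro i h
    rw [← hobsOV i h]
    unfold obs
    cases hr : R i <;> simp
  set ly : List (Fin K) := Lfree (fun i : Fin K =>
    ¬((j - m ≤ i.1 + 1 ∧ i.1 < j) ∨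
      (j ≤ i.1 ∧ i.1 < j + m ∧ (OV (i.1 + 1)).isSome = true))) with hlydef
  have hmly : ∀ i : Fin K, i ∉ ly ↔
      ((j - m ≤ i.1 + 1 ∧ i.1 < j) ∨
        (j ≤ i.1 ∧ i.1 < j + m ∧ (OV (i.1 + 1)).isSome = true)) := by
    intro i; rw [hlydef, mem_Lfree, not_not]
  set lrN : List (Fin K) := Lfree (fun i : Fin K => j + m ≤ i.1) ++ freeIcc 0 (j - 1)
    with hlrNdef
  set lrD : List (Fin K) := Lfree (fun i : Fin K => j + m ≤ i.1) ++ freeIcc 0 j with hlrDdef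
  have hmlrN : ∀ i : Fin K, i ∉ lrN ↔ (j - 1 ≤ i.1 ∧ i.1 < j + m) := by
    intro i; rw [hlrNdef]; simp [List.mem_append, mem_Lfree, mem_freeIcc]; try omega
  have hmlrD : ∀ i : Fin K, i ∉ lrD ↔ (j ≤ i.1 ∧ i.1 < j + m) := by
    intro i; rw [hlrDdef]; simp [List.mem_append, mem_Lfree, mem_freeIcc]; omega
  have ndlrN : lrN.Nodup := by
    rw [hlrNdef]
    refine List.Nodup.append (nodup_Lfree _) (nodup_freeIcc _ _) ?_
    intro a ha hb; rw [mem_Lfree] at ha; rw [mem_freeIcc] at hb; omega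
  have ndlrD : lrD.Nodup := by
    rw [hlrDdef]
    refine List.Nodup.append (nodup_Lfree _) (nodup_freeIcc _ _) ?_
    intro a ha hb; rw [mem_Lfree] at ha; rw [mem_freeIcc] at hb; omega
  have hEnum : ∀ y r : Fin K → Bool,
      (Req j j rv y r ∧ (Yeq (j - m) j yv y r ∧ Oeq (j + 1) (j + m) OV y r)) ↔
      ((∀ i, i ∉ ly → y i = Y i) ∧ (∀ i, i ∉ lrN → r i = R i)) := by
    intro y r
    constructor
    · rintro ⟨h1, h2, h3⟩
      constructor
      · intro i hi
        rcases (hmly i).mp hi with ⟨ha1, ha2⟩ | ⟨hb1, hb2, hbs⟩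
        · rw [h2 i ha1 (by omega), hYlt i (by omega)]
        · have h4 := h3 i (by omega) (by omega)
          rw [← hobsOV i (by omega)] at h4
          exact ((obs_eq_iff i).mp h4).2 (by rw [hRiso i (by omega)]; exact hbs)
      · intro i hi
        have hi' := (hmlrN i).mp hi
        by_cases hlt : i.1 < j
        · rw [h1 i (by omega) (by omega), hRlt i (by omega)]
        · have h4 := h3 i (by omega) (by omega)
          rw [← hobsOV i (by omega)] at h4
          exact ((obs_eq_iff i).mp h4).1
    · rintro ⟨hYc, hRc⟩
      refine ⟨?_, ?_, ?_⟩
      · intro i h1 h2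
        rw [hRc i ((hmlrN i).mpr (by omega)), hRlt i (by omega)]
      · intro i h1 h2
        rw [hYc i ((hmly i).mpr (Or.inl ⟨h1, by omega⟩)), hYlt i (by omega)]
      · intro i h1 h2
        rw [← hobsOV i (by omega)]
        refine (obs_eq_iff i).mpr ⟨hRc i ((hmlrN i).mpr (by omega)), fun hRt => ?_⟩
        refine hYc i ((hmly i).mpr (Or.inr ⟨by omega, by omega, ?_⟩))
        rw [← hRiso i (by omega)]; exact hRt
  have hEden : ∀ y r : Fin K → Bool,
      (Yeq (j - m) j yv y r ∧ Oeq (j + 1) (j + m) OV y r) ↔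
      ((∀ i, i ∉ ly → y i = Y i) ∧ (∀ i, i ∉ lrD → r i = R i)) := by
    intro y r
    constructor
    · rintro ⟨h2, h3⟩
      constructor
      · intro i hi
        rcases (hmly i).mp hi with ⟨ha1, ha2⟩ | ⟨hb1, hb2, hbs⟩
        · rw [h2 i ha1 (by omega), hYlt i (by omega)]
        · have h4 := h3 i (by omega) (by omega)
          rw [← hobsOV i (by omega)] at h4
          exact ((obs_eq_iff i).mp h4).2 (by rw [hRiso i (by omega)]; exact hbs)
      · intro i hi
        have hi' := (hmlrD i).mp hi
        have h4 := h3 i (by omega) (by omega)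
        rw [← hobsOV i (by omega)] at h4
        exact ((obs_eq_iff i).mp h4).1
    · rintro ⟨hYc, hRc⟩
      refine ⟨?_, ?_⟩
      · intro i h1 h2
        rw [hYc i ((hmly i).mpr (Or.inl ⟨h1, by omega⟩)), hYlt i (by omega)]
      · intro i h1 h2
        rw [← hobsOV i (by omega)]
        refine (obs_eq_iff i).mpr ⟨hRc i ((hmlrD i).mpr (by omega)), fun hRt => ?_⟩
        refine hYc i ((hmly i).mpr (Or.inr ⟨by omega, by omega, ?_⟩))
        rw [← hRiso i (by omega)]; exact hRt
  have hnum := Pr_eq_SS M.p _ ly lrN (by rw [hlydef]; exact nodup_Lfree _) ndlrN Y R hEnum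
  have hden := Pr_eq_SS M.p _ ly lrD (by rw [hlydef]; exact nodup_Lfree _) ndlrD Y R hEden
  have HaN : ∀ i : Fin K, i.1 < j → j - 1 ≤ i.1 + m → i ∉ ly :=
    fun i h1 h2 => (hmly i).mpr (Or.inl ⟨by omega, h1⟩)
  have HaD : ∀ i : Fin K, i.1 < j → j ≤ i.1 + m → i ∉ ly :=
    fun i h1 h2 => (hmly i).mpr (Or.inl ⟨by omega, h1⟩)
  have Hb : ∀ i : Fin K, j ≤ i.1 → i.1 < j + m → R i = true → i ∉ ly := by
    intro i h1 h2 h3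
    refine (hmly i).mpr (Or.inr ⟨h1, h2, ?_⟩)
    rw [← hRiso i (by omega)]; exact h3
  have hc1 := core M Y R j (j - 1) (by omega) (by omega) ly HaN Hb
  have hc2 := core M Y R j j le_rfl (by omega) ly HaD Hb
  rw [show cPr M.p (Req j j rv)
        (fun y r => Yeq (j - m) j yv y r ∧ Oeq (j + 1) (j + m) OV y r)
      = Pr M.p (fun y r => Req j j rv y r ∧
          (Yeq (j - m) j yv y r ∧ Oeq (j + 1) (j + m) OV y r)) /
        Pr M.p (fun y r => Yeq (j - m) j yv y r ∧ Oeq (j + 1) (j + m) OV y r) from rfl]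
  rw [hnum, hden, hlrNdef, hlrDdef, hc1, hc2]
  have hsing : Finset.univ.filter (fun l : Fin K => j - 1 ≤ l.1 ∧ l.1 < j) = {l0} := by
    ext l; simp [Fin.ext_iff]; try omega
  have hemp : Finset.univ.filter (fun l : Fin K => j ≤ l.1 ∧ l.1 < j) = ∅ := by
    ext l; simp; try omega
  rw [hsing, Finset.prod_singleton, hemp, Finset.prod_empty, one_mul, mul_div_assoc,
    div_self, mul_one]
  refine ne_of_gt (SS_pos _ _ _ fun y => mul_pos (Finset.prod_pos fun l _ => M.a_pos l y)
    (SS_pos _ _ _ fun r => Finset.prod_pos fun l _ => M.b_pos l y r))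

end S14


/-- Block factorization of the early response indicators.  Under the
`m`th-order Markov model, for every `m + 1 < k ≤ K − m − 1` and all values of the variables,
`f(R̄_{k−m} | Ȳ_{k−m}, Ōᵐₖ) = ∏_{j=1}^{k−m−1} f(Rⱼ | Ȳ^{m+1}_{j+1}, O̲ᵐⱼ)`,
where the `O`-arguments in each factor are determined by the conditioning values
(`Oⱼ = ov j` for conditioned positions `k − m ≤ j ≤ k − 1`, and `Oⱼ = (rv j, yv j)` for
positions in the block, determined by conditioned outcomes and the block `R`-values). -/
theorem statement14 (K m : ℕ) (hm : 1 ≤ m) (hKm : 2 * m + 1 < K) (M : Markov K m)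
    (k : ℕ) (hk1 : m + 1 < k) (hk2 : k ≤ K - m - 1)
    (yv : ℕ → Bool) (rv : ℕ → Bool) (ov : ℕ → Option Bool) :
    cPr M.p (Req 1 (k - m - 1) rv)
        (fun y r => Yeq 1 (k - m - 1) yv y r ∧ Oeq (k - m) (k - 1) ov y r)
      = ∏ j ∈ Finset.Icc 1 (k - m - 1),
          cPr M.p (Req j j rv)
            (fun y r => Yeq (j - m) j yv y r ∧
              Oeq (j + 1) (j + m)
                (fun n => if k - m ≤ n then ov n
                  else if rv n then some (yv n) else none) y r) := by
  classical
  rw [S14.lhs_eq M hm hKm k hk1 hk2 yv rv ov]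
  refine Finset.prod_bij (fun (l : Fin K) _ => l.1 + 1) ?_ ?_ ?_ ?_
  · intro a ha
    simp only [Finset.mem_filter] at ha
    simp only [Finset.mem_Icc]
    omega
  · intro a1 ha1 a2 ha2 h
    have h' : a1.1 + 1 = a2.1 + 1 := h
    exact Fin.ext (by omega)
  · intro b hb
    rw [Finset.mem_Icc] at hb
    have hbK : b - 1 < K := by omega
    refine ⟨⟨b - 1, hbK⟩, ?_, ?_⟩
    · simp only [Finset.mem_filter]
      refine ⟨Finset.mem_univ _, by simp; omega⟩
    · show b - 1 + 1 = b
      omega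
  · intro l hl
    simp only [Finset.mem_filter] at hl
    exact (S14.rhs_eq M hm hKm k hk1 hk2 yv rv ov (l.1 + 1) l rfl (by omega)).symm


end MRM
end

section
/- (Worked example, K = 7 and m = 2: full-data identification formula.) Under the mth-order Markov model with K = 7 and m = 2 together with the exponential tilting restriction, for all (y₁,…,y₇) ∈ {0,1}⁷: f(Y₁ = y₁, …, Y₇ = y₇) = [Σ_{o₂,o₃,o₄} f(Y₁,O₂,O₃,O₄)] × [Σ_{o₃,o₄,o₅} f(Y₁,Y₂,O₃,O₄,O₅)] / [Σ_{y₂'} Σ_{o₃,o₄,o₅} f(Y₁,Y₂,O₃,O₄,O₅)] × [Σ_{o₄,o₅,o₆} f(Y₁,Y₂,Y₃,O₄,O₅,O₆)] / [Σ_{y₃'} Σ_{o₄,o₅,o₆} f(Y₁,Y₂,Y₃,O₄,O₅,O₆)] × [Σ_{o₅,o₆,o₇} f(Y₂,Y₃,Y₄,O₅,O₆,O₇)] / [Σ_{y₄'} Σ_{o₅,o₆,o₇} f(Y₂,Y₃,Y₄,O₅,O₆,O₇)] × [Σ_{o₆,o₇} f(Y₃,Y₄,Y₅,O₆,O₇)]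 / [Σ_{y₅'} Σ_{o₆,o₇} f(Y₃,Y₄,Y₅,O₆,O₇)] × [Σ_{o₇} f(Y₄,Y₅,Y₆,O₇)] / [Σ_{y₆'} Σ_{o₇} f(Y₄,Y₅,Y₆,O₇)] × f(Y₅,Y₆,Y₇) / [Σ_{y₇'} f(Y₅,Y₆,Y₇)], where each f(·) denotes the joint pmf of the indicated mixed vector of outcomes and observed data evaluated at the corresponding entries of (y₁,…,y₇), the primed sums replace the last Y-argument by a summation variable, and the o-sums run over the three possible values of each Oⱼ. -/
open scoped Classical BigOperators

namespace MRM

/-- Joint pmf of a mixed vector of outcomes (1-based positions `ylo ≤ pos ≤ yhi`) and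
observed data (positions `olo ≤ pos ≤ ohi`), in the worked example `K = 7`, `m = 2`. -/
noncomputable def J7 (M : Markov 7 2) (ylo yhi olo ohi : ℕ)
    (yv : ℕ → Bool) (ov : ℕ → Option Bool) : ℝ :=
  Pr M.p (fun y r => Yeq ylo yhi yv y r ∧ Oeq olo ohi ov y r)

/-- Marginalization over the three possible values of each of `O_{olo}, O_{olo+1}, O_{olo+2}`
of the joint pmf of `(Y_{ylo}, …, Y_{yhi}, O_{olo}, O_{olo+1}, O_{olo+2})`. -/
noncomputable def S3 (M : Markov 7 2) (ylo yhi olo : ℕ) (yv : ℕ → Bool) : ℝ :=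
  ∑ o1 : Option Bool, ∑ o2 : Option Bool, ∑ o3 : Option Bool,
    J7 M ylo yhi olo (olo + 2) yv
      (fun n => if n = olo then o1 else if n = olo + 1 then o2 else o3)

/-- Marginalization over the three possible values of each of `O_{olo}, O_{olo+1}`. -/
noncomputable def S2 (M : Markov 7 2) (ylo yhi olo : ℕ) (yv : ℕ → Bool) : ℝ :=
  ∑ o1 : Option Bool, ∑ o2 : Option Bool,
    J7 M ylo yhi olo (olo + 1) yv (fun n => if n = olo then o1 else o2)

/-- Marginalization over the three possible values of `O_{olo}`. -/
noncomputable def S1 (M : Markov 7 2) (ylo yhi olo : ℕ) (yv : ℕ → Bool) : ℝ :=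
  ∑ o1 : Option Bool, J7 M ylo yhi olo olo yv (fun _ => o1)

-- test peel lemma
lemma peel {K : ℕ} (i : Fin K) (g h : (Fin K → Bool) → ℝ)
    (hg : ∀ s, ∑ v : Bool, g (Function.update s i v) = 1)
    (hh : ∀ s v, h (Function.update s i v) = h s) :
    (∑ s : Fin K → Bool, g s * h s)
      = ∑ s : Fin K → Bool, (if s i = false then h s else 0) := by
  classical
  set e := Equiv.funSplitAt i Bool with he
  have fst : ∀ (v : Bool) (t : {j : Fin K // j ≠ i} → Bool), e.symm (v, t) i = v := by
    intro v t
    have h1 := e.apply_symm_apply (v, t)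
    exact congrArg Prod.fst h1
  have key : ∀ (v : Bool) (t : {j : Fin K // j ≠ i} → Bool),
      e.symm (v, t) = Function.update (e.symm (false, t)) i v := by
    intro v t
    funext j
    by_cases hj : j = i
    · subst hj
      rw [Function.update_self, fst]
    · rw [Function.update_of_ne hj]
      have h1 := congrArg Prod.snd (e.apply_symm_apply (v, t))
      have h2 := congrArg Prod.snd (e.apply_symm_apply (false, t))
      have e1 : e.symm (v, t) j = t ⟨j, hj⟩ := congrFun h1 ⟨j, hj⟩
      have e2 : e.symm (false, t) j = t ⟨j, hj⟩ := congrFun h2 ⟨j, hj⟩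
      rw [e1, e2]
  have hsum : ∀ F : (Fin K → Bool) → ℝ,
      (∑ s : Fin K → Bool, F s) = ∑ x : Bool × ({j : Fin K // j ≠ i} → Bool), F (e.symm x) :=
    fun F => (Equiv.sum_comp e.symm F).symm
  rw [hsum fun s => g s * h s, hsum fun s => if s i = false then h s else 0]
  rw [Fintype.sum_prod_type, Fintype.sum_prod_type]
  rw [Finset.sum_comm]
  conv_rhs => rw [Finset.sum_comm]
  refine Finset.sum_congr rfl fun t _ => ?_
  have hL : ∀ v : Bool, g (e.symm (v, t)) * h (e.symm (v, t))
      = g (Function.update (e.symm (false, t)) i v) * h (e.symm (false, t)) := by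
    intro v
    rw [key v t, hh]
  calc (∑ v : Bool, g (e.symm (v, t)) * h (e.symm (v, t)))
      = ∑ v : Bool, g (Function.update (e.symm (false, t)) i v) * h (e.symm (false, t)) := by
        exact Finset.sum_congr rfl fun v _ => hL v
    _ = (∑ v : Bool, g (Function.update (e.symm (false, t)) i v)) * h (e.symm (false, t)) := by
        rw [Finset.sum_mul]
    _ = h (e.symm (false, t)) := by rw [hg, one_mul]
    _ = ∑ v : Bool, (if (e.symm (v, t)) i = false then h (e.symm (v, t)) else 0) := by
        rw [Fintype.sum_bool, fst, fst]
        simp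

lemma Bsum_aux (M : Markov 7 2) (y : Fin 7 → Bool) :
    ∀ d : ℕ, d ≤ 7 →
      (∑ r : Fin 7 → Bool, if (∀ j : Fin 7, j.1 < 7 - d → r j = false)
        then ∏ k ∈ Finset.univ.filter (fun k : Fin 7 => 7 - d ≤ k.1), M.b k y r else 0) = 1 := by
  intro d
  induction d with
  | zero =>
    intro _
    have hfil : Finset.univ.filter (fun k : Fin 7 => 7 - 0 ≤ k.1) = ∅ := by
      apply Finset.filter_eq_empty_iff.mpr
      intro k _
      omega
    have hcond : ∀ r : Fin 7 → Bool,
        (∀ j : Fin 7, j.1 < 7 - 0 → r j = false) ↔ r = fun _ => false := by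
      intro r
      constructor
      · intro h'; funext j; exact h' j (by omega)
      · intro h' j _; rw [h']
    rw [hfil]
    simp only [Finset.prod_empty, hcond]
    rw [Finset.sum_ite_eq' Finset.univ (fun _ => false) fun _ => (1:ℝ)]
    simp
  | succ d ih =>
    intro hd
    have ih' := ih (by omega)
    set n : ℕ := 7 - (d + 1) with hn
    have hn7 : n < 7 := by omega
    have harith : 7 - d = n + 1 := by omega
    rw [harith] at ih'
    set i : Fin 7 := ⟨n, hn7⟩ with hi
    have hfil : Finset.univ.filter (fun k : Fin 7 => n ≤ k.1)
        = insert i (Finset.univ.filter (fun k : Fin 7 => n + 1 ≤ k.1)) := by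
      ext k
      simp only [Finset.mem_filter, Finset.mem_insert, Finset.mem_univ, true_and, Fin.ext_iff]
      show n ≤ k.1 ↔ k.1 = i.1 ∨ n + 1 ≤ k.1
      have : i.1 = n := rfl
      omega
    have hnm : i ∉ Finset.univ.filter (fun k : Fin 7 => n + 1 ≤ k.1) := by
      simp only [Finset.mem_filter, Finset.mem_univ, true_and]
      show ¬ (n + 1 ≤ i.1)
      have : i.1 = n := rfl
      omega
    have hsplit : ∀ r, (∏ k ∈ Finset.univ.filter (fun k : Fin 7 => n ≤ k.1), M.b k y r)
        = M.b i y r * ∏ k ∈ Finset.univ.filter (fun k : Fin 7 => n + 1 ≤ k.1), M.b k y r := by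
      intro r
      rw [hfil, Finset.prod_insert hnm]
    have hstep : (∑ r : Fin 7 → Bool, if (∀ j : Fin 7, j.1 < n → r j = false)
        then ∏ k ∈ Finset.univ.filter (fun k : Fin 7 => n ≤ k.1), M.b k y r else 0)
        = ∑ r : Fin 7 → Bool, M.b i y r *
          (if (∀ j : Fin 7, j.1 < n → r j = false)
            then ∏ k ∈ Finset.univ.filter (fun k : Fin 7 => n + 1 ≤ k.1), M.b k y r else 0) := by
      refine Finset.sum_congr rfl fun r _ => ?_
      by_cases hc : ∀ j : Fin 7, j.1 < n → r j = false
      · rw [if_pos hc, if_pos hc, hsplit]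
      · rw [if_neg hc, if_neg hc, mul_zero]
    rw [hstep]
    have hpeel := peel i (fun r => M.b i y r)
      (fun r => if (∀ j : Fin 7, j.1 < n → r j = false)
        then ∏ k ∈ Finset.univ.filter (fun k : Fin 7 => n + 1 ≤ k.1), M.b k y r else 0)
      (fun s => M.b_pmf i y s)
      (by
        intro s v
        have hcond : (∀ j : Fin 7, j.1 < n → Function.update s i v j = false)
            ↔ (∀ j : Fin 7, j.1 < n → s j = false) := by
          constructor
          · intro h' j hj
            have hne : j ≠ i := by
              intro hji
              have : j.1 = n := by rw [hji]
              omega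
            have := h' j hj
            rwa [Function.update_of_ne hne] at this
          · intro h' j hj
            have hne : j ≠ i := by
              intro hji
              have : j.1 = n := by rw [hji]
              omega
            rw [Function.update_of_ne hne]
            exact h' j hj
        have hprod : (∏ k ∈ Finset.univ.filter (fun k : Fin 7 => n + 1 ≤ k.1),
            M.b k y (Function.update s i v))
            = ∏ k ∈ Finset.univ.filter (fun k : Fin 7 => n + 1 ≤ k.1), M.b k y s := by
          refine Finset.prod_congr rfl fun k hk => ?_
          have hk' : n + 1 ≤ k.1 := by
            simpa using (Finset.mem_filter.mp hk).2
          have hne : k ≠ i := by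
            intro hki
            have : k.1 = n := by rw [hki]
            omega
          refine M.b_local k y (Function.update s i v) y s ?_ (fun j _ _ => rfl) ?_
          · rw [Function.update_of_ne hne]
          · intro j hj1 _
            have hjne : j ≠ i := by
              intro hji
              have : j.1 = n := by rw [hji]
              omega
            unfold obs
            rw [Function.update_of_ne hjne]
        by_cases hc : ∀ j : Fin 7, j.1 < n → s j = false
        · rw [if_pos (hcond.mpr hc), if_pos hc, hprod]
        · rw [if_neg (fun h' => hc (hcond.mp h')), if_neg hc])
    rw [hpeel]
    rw [← ih']
    refine Finset.sum_congr rfl fun r _ => ?_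
    have hcond2 : (∀ j : Fin 7, j.1 < n + 1 → r j = false)
        ↔ (r i = false ∧ ∀ j : Fin 7, j.1 < n → r j = false) := by
      constructor
      · intro h'
        exact ⟨h' i (Nat.lt_succ_self n), fun j hj => h' j (by omega)⟩
      · rintro ⟨h1, h2⟩ j hj
        by_cases hjn : j.1 < n
        · exact h2 j hjn
        · have : j = i := by
            apply Fin.ext
            show j.1 = n
            omega
          rw [this]; exact h1
    by_cases hri : r i = false
    · rw [if_pos hri]
      by_cases hc : ∀ j : Fin 7, j.1 < n → r j = false
      · rw [if_pos hc, if_pos (hcond2.mpr ⟨hri, hc⟩)]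
      · rw [if_neg hc, if_neg (fun h' => hc (hcond2.mp h').2)]
    · rw [if_neg hri, if_neg (fun h' => hri (hcond2.mp h').1)]

lemma Bsum (M : Markov 7 2) (y : Fin 7 → Bool) :
    ∑ r : Fin 7 → Bool, ∏ k : Fin 7, M.b k y r = 1 := by
  have h := Bsum_aux M y 7 le_rfl
  have hfil : Finset.univ.filter (fun k : Fin 7 => 7 - 7 ≤ k.1) = Finset.univ :=
    Finset.filter_true_of_mem fun _ _ => by omega
  rw [hfil] at h
  rw [← h]
  refine Finset.sum_congr rfl fun r _ => ?_
  rw [if_pos (fun j hj => absurd hj (by omega))]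

/-- Outcome-window matching predicate. -/
def Match (lo hi : ℕ) (yv : ℕ → Bool) (y : Fin 7 → Bool) : Prop :=
  ∀ j : Fin 7, lo ≤ j.1 + 1 → j.1 + 1 ≤ hi → y j = yv (j.1 + 1)

/-- The marginal (over response indicators) probability that the outcomes match `yv`
on the window `lo..hi`. -/
noncomputable def W (M : Markov 7 2) (lo hi : ℕ) (yv : ℕ → Bool) : ℝ :=
  ∑ y : Fin 7 → Bool, if Match lo hi yv y then ∏ k : Fin 7, M.a k y else 0

lemma Pr_congr {K : ℕ} (p : (Fin K → Bool) → (Fin K → Bool) → ℝ)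
    {A B : (Fin K → Bool) → (Fin K → Bool) → Prop}
    (h : ∀ y r, A y r ↔ B y r) : Pr p A = Pr p B := by
  unfold Pr
  refine Finset.sum_congr rfl fun y _ => Finset.sum_congr rfl fun r _ => ?_
  exact if_congr (h y r) rfl rfl

lemma collapse {K : ℕ} {β : Type} [Fintype β] [DecidableEq β]
    (p : (Fin K → Bool) → (Fin K → Bool) → ℝ)
    (A : (Fin K → Bool) → (Fin K → Bool) → Prop)
    (x : (Fin K → Bool) → (Fin K → Bool) → β) :
    (∑ o : β, Pr p (fun y r => A y r ∧ x y r = o)) = Pr p A := by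
  unfold Pr
  rw [Finset.sum_comm]
  refine Finset.sum_congr rfl fun y _ => ?_
  rw [Finset.sum_comm]
  refine Finset.sum_congr rfl fun r _ => ?_
  by_cases hA : A y r
  · simp [hA]
  · simp [hA]

lemma Pr_y (M : Markov 7 2) (Q : (Fin 7 → Bool) → Prop) :
    Pr M.p (fun y _ => Q y)
      = ∑ y : Fin 7 → Bool, if Q y then ∏ k : Fin 7, M.a k y else 0 := by
  unfold Pr
  refine Finset.sum_congr rfl fun y _ => ?_
  by_cases hQ : Q y
  · rw [if_pos hQ]
    have hfac : ∀ r, M.p y r = (∏ k : Fin 7, M.a k y) * ∏ k : Fin 7, M.b k y r := by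
      intro r
      rw [M.factor, Finset.prod_mul_distrib]
    calc (∑ r : Fin 7 → Bool, if Q y then M.p y r else 0)
        = ∑ r : Fin 7 → Bool, (∏ k : Fin 7, M.a k y) * ∏ k : Fin 7, M.b k y r :=
          Finset.sum_congr rfl fun r _ => by rw [if_pos hQ, hfac]
      _ = (∏ k : Fin 7, M.a k y) * ∑ r : Fin 7 → Bool, ∏ k : Fin 7, M.b k y r := by
          rw [Finset.mul_sum]
      _ = ∏ k : Fin 7, M.a k y := by rw [Bsum, mul_one]
  · rw [if_neg hQ]
    exact Finset.sum_eq_zero fun r _ => if_neg hQ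

lemma PrYeq (M : Markov 7 2) (lo hi : ℕ) (yv : ℕ → Bool) :
    Pr M.p (Yeq lo hi yv) = W M lo hi yv :=
  Pr_y M (Match lo hi yv)

lemma W_pos (M : Markov 7 2) (lo hi : ℕ) (yv : ℕ → Bool) : 0 < W M lo hi yv := by
  unfold W
  apply Finset.sum_pos'
  · intro y _
    by_cases hc : Match lo hi yv y
    · rw [if_pos hc]
      exact le_of_lt (Finset.prod_pos fun k _ => M.a_pos k y)
    · rw [if_neg hc]
  · refine ⟨fun j => yv (j.1 + 1), Finset.mem_univ _, ?_⟩
    have hc : Match lo hi yv (fun j => yv (j.1 + 1)) := fun j _ _ => rfl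
    rw [if_pos hc]
    exact Finset.prod_pos fun k _ => M.a_pos k _

lemma Match_update (lo h : ℕ) (hlo : lo ≤ h + 1) (h7 : h + 1 ≤ 7) (yv : ℕ → Bool)
    (v : Bool) (y : Fin 7 → Bool) :
    Match lo (h + 1) (Function.update yv (h + 1) v) y
      ↔ Match lo h yv y ∧ y ⟨h, by omega⟩ = v := by
  constructor
  · intro hm
    constructor
    · intro j hj1 hj2
      have := hm j hj1 (by omega)
      rwa [Function.update_of_ne (by omega : j.1 + 1 ≠ h + 1)] at this
    · have := hm ⟨h, by omega⟩ (by simpa using hlo) (by simp)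
      simpa using this
  · rintro ⟨hm, hv⟩ j hj1 hj2
    by_cases hj : j.1 + 1 = h + 1
    · have hje : j = (⟨h, by omega⟩ : Fin 7) := Fin.ext (show j.1 = h by omega)
      rw [hje, hv, ← hj]
      rw [hje]
      simp [Function.update_self]
    · rw [Function.update_of_ne hj]
      exact hm j hj1 (by omega)

lemma W_margin (M : Markov 7 2) (lo h : ℕ) (hlo : lo ≤ h + 1) (h7 : h + 1 ≤ 7)
    (yv : ℕ → Bool) :
    (∑ v : Bool, W M lo (h + 1) (Function.update yv (h + 1) v)) = W M lo h yv := by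
  unfold W
  rw [Finset.sum_comm]
  refine Finset.sum_congr rfl fun y _ => ?_
  have hiff := fun v => Match_update lo h hlo h7 yv v y
  by_cases hm : Match lo h yv y
  · rw [if_pos hm]
    calc (∑ v : Bool, if Match lo (h + 1) (Function.update yv (h + 1) v) y
          then ∏ k : Fin 7, M.a k y else 0)
        = ∑ v : Bool, if y ⟨h, by omega⟩ = v then ∏ k : Fin 7, M.a k y else 0 := by
          refine Finset.sum_congr rfl fun v _ => ?_
          refine if_congr ?_ rfl rfl
          rw [hiff v]
          simp [hm]
      _ = ∏ k : Fin 7, M.a k y := by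
          rw [Finset.sum_ite_eq Finset.univ (y ⟨h, by omega⟩) fun _ => (∏ k : Fin 7, M.a k y)]
          simp
  · rw [if_neg hm]
    refine Finset.sum_eq_zero fun v _ => ?_
    rw [if_neg]
    intro hcon
    exact hm ((hiff v).mp hcon).1

/-- Splice: prefix (positions `≤ q+1`) from `y`, suffix from `z`. -/
def mix (q : ℕ) (y z : Fin 7 → Bool) (j : Fin 7) : Bool :=
  if j.1 ≤ q then y j else z j

lemma mix_invol (q : ℕ) (y z : Fin 7 → Bool) : mix q (mix q y z) (mix q z y) = y := by
  funext j
  unfold mix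
  by_cases hj : j.1 ≤ q <;> simp [hj]

/-- The suffix-swap involution on pairs. -/
def mixE (q : ℕ) : ((Fin 7 → Bool) × (Fin 7 → Bool)) ≃ ((Fin 7 → Bool) × (Fin 7 → Bool)) where
  toFun p := (mix q p.1 p.2, mix q p.2 p.1)
  invFun p := (mix q p.1 p.2, mix q p.2 p.1)
  left_inv p := by
    cases p with
    | mk y z => simp [mix_invol]
  right_inv p := by
    cases p with
    | mk y z => simp [mix_invol]

lemma cross (M : Markov 7 2) (yv : ℕ → Bool) (lo q : ℕ)
    (h1 : 1 ≤ lo) (h2 : lo ≤ q) (h7 : q + 2 ≤ 7) :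
    W M lo (q + 2) yv * W M q (q + 1) yv
      = W M lo (q + 1) yv * W M q (q + 2) yv := by
  unfold W
  rw [Finset.sum_mul_sum, Finset.sum_mul_sum]
  rw [← Fintype.sum_prod_type', ← Fintype.sum_prod_type']
  refine (Fintype.sum_equiv (mixE q)
    (fun p => (if Match lo (q + 1) yv p.1 then ∏ k : Fin 7, M.a k p.1 else 0) *
      (if Match q (q + 2) yv p.2 then ∏ k : Fin 7, M.a k p.2 else 0))
    (fun p => (if Match lo (q + 2) yv p.1 then ∏ k : Fin 7, M.a k p.1 else 0) *
      (if Match q (q + 1) yv p.2 then ∏ k : Fin 7, M.a k p.2 else 0)) ?_).symm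
  rintro ⟨y, z⟩
  dsimp only [mixE, Equiv.coe_fn_mk]
  show _ = (if Match lo (q + 2) yv (mix q y z) then ∏ k : Fin 7, M.a k (mix q y z) else 0) *
    (if Match q (q + 1) yv (mix q z y) then ∏ k : Fin 7, M.a k (mix q z y) else 0)
  -- index for position q+2 is q+1
  have hq1 : q + 1 < 7 := by omega
  set jq : Fin 7 := ⟨q + 1, hq1⟩ with hjq
  have hjqv : (jq : ℕ) = q + 1 := rfl
  -- conditions
  have F1 : Match lo (q + 2) yv (mix q y z) ↔ (Match lo (q + 1) yv y ∧ z jq = yv (q + 2)) := by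
    constructor
    · intro hm
      constructor
      · intro j hj1 hj2
        have := hm j hj1 (by omega)
        rwa [mix, if_pos (by omega : j.1 ≤ q)] at this
      · have := hm jq (by omega) (by omega)
        rwa [mix, if_neg (by omega : ¬ jq.1 ≤ q)] at this
    · rintro ⟨hm, hz⟩ j hj1 hj2
      by_cases hj : j.1 ≤ q
      · rw [mix, if_pos hj]
        exact hm j hj1 (by omega)
      · have hje : j = jq := Fin.ext (show j.1 = q + 1 by omega)
        rw [mix, if_neg hj, hje, hz]
  have F2 : Match q (q + 1) yv (mix q z y) ↔ Match q (q + 1) yv z := by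
    constructor
    · intro hm j hj1 hj2
      have := hm j hj1 hj2
      rwa [mix, if_pos (by omega : j.1 ≤ q)] at this
    · intro hm j hj1 hj2
      rw [mix, if_pos (by omega : j.1 ≤ q)]
      exact hm j hj1 hj2
  have F3 : Match q (q + 2) yv z ↔ (Match q (q + 1) yv z ∧ z jq = yv (q + 2)) := by
    constructor
    · intro hm
      refine ⟨fun j hj1 hj2 => hm j hj1 (by omega), ?_⟩
      have := hm jq (by omega) (by omega)
      simpa using this
    · rintro ⟨hm, hz⟩ j hj1 hj2
      by_cases hj : j.1 + 1 ≤ q + 1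
      · exact hm j hj1 hj
      · have hje : j = jq := Fin.ext (show j.1 = q + 1 by omega)
        rw [hje, hz]
  by_cases hy : Match lo (q + 1) yv y
  · by_cases hz : Match q (q + 2) yv z
    · -- both events hold; conditions on mixed pair hold too, and products agree
      have hz' : Match q (q + 1) yv z := (F3.mp hz).1
      have hzq : z jq = yv (q + 2) := (F3.mp hz).2
      rw [if_pos hy, if_pos hz, if_pos (F1.mpr ⟨hy, hzq⟩), if_pos (F2.mpr hz')]
      -- product identity
      rw [← Finset.prod_mul_distrib, ← Finset.prod_mul_distrib]
      refine Finset.prod_congr rfl fun j _ => ?_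
      by_cases hj : j.1 ≤ q
      · have e1 : M.a j (mix q y z) = M.a j y := by
          refine M.a_local j _ _ fun i _ hi2 => ?_
          rw [mix, if_pos (by omega : i.1 ≤ q)]
        have e2 : M.a j (mix q z y) = M.a j z := by
          refine M.a_local j _ _ fun i _ hi2 => ?_
          rw [mix, if_pos (by omega : i.1 ≤ q)]
        rw [e1, e2]
      · have agree : ∀ i : Fin 7, j.1 + 1 - 2 ≤ i.1 + 1 → i.1 ≤ j.1 → i.1 ≤ q → y i = z i := by
          intro i hi1 hi2 hiq
          have hrange1 : q ≤ i.1 + 1 := by omega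
          have hrange2 : i.1 + 1 ≤ q + 1 := by omega
          rw [hy i (by omega) hrange2, hz' i hrange1 hrange2]
        have e1 : M.a j (mix q y z) = M.a j z := by
          refine M.a_local j _ _ fun i hi1 hi2 => ?_
          by_cases hiq : i.1 ≤ q
          · rw [mix, if_pos hiq]
            exact agree i hi1 hi2 hiq
          · rw [mix, if_neg hiq]
        have e2 : M.a j (mix q z y) = M.a j y := by
          refine M.a_local j _ _ fun i hi1 hi2 => ?_
          by_cases hiq : i.1 ≤ q
          · rw [mix, if_pos hiq]
            exact (agree i hi1 hi2 hiq).symm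
          · rw [mix, if_neg hiq]
        rw [e1, e2, mul_comm]
    · -- z fails: either z fails q..q+1, or z at q+2 wrong; in both cases RHS-of-equation side is 0
      rw [if_neg hz, mul_zero]
      by_cases hz' : Match q (q + 1) yv z
      · have hzq : ¬ z jq = yv (q + 2) := fun hc => hz (F3.mpr ⟨hz', hc⟩)
        rw [if_neg (fun hc => hzq (F1.mp hc).2), zero_mul]
      · rw [if_neg (fun hc => hz' (F2.mp hc)), mul_zero]
  · rw [if_neg hy, zero_mul]
    rw [if_neg (fun hc => hy (F1.mp hc).1), zero_mul]

lemma S3W (M : Markov 7 2) (ylo yhi olo : ℕ) (h1 : 1 ≤ olo) (h2 : olo + 2 ≤ 7)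
    (yv : ℕ → Bool) : S3 M ylo yhi olo yv = W M ylo yhi yv := by
  have hja : olo - 1 < 7 := by omega
  have hjb : olo < 7 := by omega
  have hjc : olo + 1 < 7 := by omega
  set ja : Fin 7 := ⟨olo - 1, hja⟩ with hjadef
  set jb : Fin 7 := ⟨olo, hjb⟩ with hjbdef
  set jc : Fin 7 := ⟨olo + 1, hjc⟩ with hjcdef
  have hjav : (ja : ℕ) = olo - 1 := rfl
  have hjbv : (jb : ℕ) = olo := rfl
  have hjcv : (jc : ℕ) = olo + 1 := rfl
  have key : ∀ (o1 o2 o3 : Option Bool) (y r : Fin 7 → Bool),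
      Oeq olo (olo + 2) (fun n => if n = olo then o1 else if n = olo + 1 then o2 else o3) y r
        ↔ (obs y r ja = o1 ∧ obs y r jb = o2) ∧ obs y r jc = o3 := by
    intro o1 o2 o3 y r
    constructor
    · intro h
      refine ⟨⟨?_, ?_⟩, ?_⟩
      · have := h ja (by omega) (by omega)
        rw [this]
        beta_reduce
        rw [if_pos (by omega : ja.1 + 1 = olo)]
      · have := h jb (by omega) (by omega)
        rw [this]
        beta_reduce
        rw [if_neg (by omega : ¬ jb.1 + 1 = olo), if_pos (by omega : jb.1 + 1 = olo + 1)]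
      · have := h jc (by omega) (by omega)
        rw [this]
        beta_reduce
        rw [if_neg (by omega : ¬ jc.1 + 1 = olo), if_neg (by omega : ¬ jc.1 + 1 = olo + 1)]
    · rintro ⟨⟨ha, hb⟩, hc⟩ j hj1 hj2
      have hcases : j.1 = olo - 1 ∨ j.1 = olo ∨ j.1 = olo + 1 := by omega
      rcases hcases with hcase | hcase | hcase
      · have hje : j = ja := Fin.ext (show j.1 = olo - 1 by omega)
        rw [hje, ha]
        beta_reduce
        rw [if_pos (by omega : ja.1 + 1 = olo)]
      · have hje : j = jb := Fin.ext (show j.1 = olo by omega)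
        rw [hje, hb]
        beta_reduce
        rw [if_neg (by omega : ¬ jb.1 + 1 = olo), if_pos (by omega : jb.1 + 1 = olo + 1)]
      · have hje : j = jc := Fin.ext (show j.1 = olo + 1 by omega)
        rw [hje, hc]
        beta_reduce
        rw [if_neg (by omega : ¬ jc.1 + 1 = olo), if_neg (by omega : ¬ jc.1 + 1 = olo + 1)]
  unfold S3 J7
  calc (∑ o1 : Option Bool, ∑ o2 : Option Bool, ∑ o3 : Option Bool,
        Pr M.p (fun y r => Yeq ylo yhi yv y r ∧ Oeq olo (olo + 2)
          (fun n => if n = olo then o1 else if n = olo + 1 then o2 else o3) y r))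
      = ∑ o1 : Option Bool, ∑ o2 : Option Bool, ∑ o3 : Option Bool,
        Pr M.p (fun y r => ((Yeq ylo yhi yv y r ∧ obs y r ja = o1) ∧ obs y r jb = o2)
          ∧ obs y r jc = o3) := by
        refine Finset.sum_congr rfl fun o1 _ => Finset.sum_congr rfl fun o2 _ =>
          Finset.sum_congr rfl fun o3 _ => Pr_congr M.p fun y r => ?_
        have := key o1 o2 o3 y r
        tauto
    _ = ∑ o1 : Option Bool, ∑ o2 : Option Bool,
        Pr M.p (fun y r => (Yeq ylo yhi yv y r ∧ obs y r ja = o1) ∧ obs y r jb = o2) := by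
        refine Finset.sum_congr rfl fun o1 _ => Finset.sum_congr rfl fun o2 _ => ?_
        exact collapse M.p _ (fun y r => obs y r jc)
    _ = ∑ o1 : Option Bool, Pr M.p (fun y r => Yeq ylo yhi yv y r ∧ obs y r ja = o1) := by
        refine Finset.sum_congr rfl fun o1 _ => ?_
        exact collapse M.p _ (fun y r => obs y r jb)
    _ = Pr M.p (Yeq ylo yhi yv) := collapse M.p _ (fun y r => obs y r ja)
    _ = W M ylo yhi yv := PrYeq M ylo yhi yv

lemma S2W (M : Markov 7 2) (ylo yhi olo : ℕ) (h1 : 1 ≤ olo) (h2 : olo + 1 ≤ 7)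
    (yv : ℕ → Bool) : S2 M ylo yhi olo yv = W M ylo yhi yv := by
  have hja : olo - 1 < 7 := by omega
  have hjb : olo < 7 := by omega
  set ja : Fin 7 := ⟨olo - 1, hja⟩ with hjadef
  set jb : Fin 7 := ⟨olo, hjb⟩ with hjbdef
  have hjav : (ja : ℕ) = olo - 1 := rfl
  have hjbv : (jb : ℕ) = olo := rfl
  have key : ∀ (o1 o2 : Option Bool) (y r : Fin 7 → Bool),
      Oeq olo (olo + 1) (fun n => if n = olo then o1 else o2) y r
        ↔ obs y r ja = o1 ∧ obs y r jb = o2 := by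
    intro o1 o2 y r
    constructor
    · intro h
      constructor
      · have := h ja (by omega) (by omega)
        rw [this]
        beta_reduce
        rw [if_pos (by omega : ja.1 + 1 = olo)]
      · have := h jb (by omega) (by omega)
        rw [this]
        beta_reduce
        rw [if_neg (by omega : ¬ jb.1 + 1 = olo)]
    · rintro ⟨ha, hb⟩ j hj1 hj2
      have hcases : j.1 = olo - 1 ∨ j.1 = olo := by omega
      rcases hcases with hcase | hcase
      · have hje : j = ja := Fin.ext (show j.1 = olo - 1 by omega)
        rw [hje, ha]
        beta_reduce
        rw [if_pos (by omega : ja.1 + 1 = olo)]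
      · have hje : j = jb := Fin.ext (show j.1 = olo by omega)
        rw [hje, hb]
        beta_reduce
        rw [if_neg (by omega : ¬ jb.1 + 1 = olo)]
  unfold S2 J7
  calc (∑ o1 : Option Bool, ∑ o2 : Option Bool,
        Pr M.p (fun y r => Yeq ylo yhi yv y r ∧ Oeq olo (olo + 1)
          (fun n => if n = olo then o1 else o2) y r))
      = ∑ o1 : Option Bool, ∑ o2 : Option Bool,
        Pr M.p (fun y r => (Yeq ylo yhi yv y r ∧ obs y r ja = o1) ∧ obs y r jb = o2) := by
        refine Finset.sum_congr rfl fun o1 _ => Finset.sum_congr rfl fun o2 _ =>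
          Pr_congr M.p fun y r => ?_
        have := key o1 o2 y r
        tauto
    _ = ∑ o1 : Option Bool, Pr M.p (fun y r => Yeq ylo yhi yv y r ∧ obs y r ja = o1) := by
        refine Finset.sum_congr rfl fun o1 _ => ?_
        exact collapse M.p _ (fun y r => obs y r jb)
    _ = Pr M.p (Yeq ylo yhi yv) := collapse M.p _ (fun y r => obs y r ja)
    _ = W M ylo yhi yv := PrYeq M ylo yhi yv

lemma S1W (M : Markov 7 2) (ylo yhi olo : ℕ) (h1 : 1 ≤ olo) (h2 : olo ≤ 7)
    (yv : ℕ → Bool) : S1 M ylo yhi olo yv = W M ylo yhi yv := by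
  have hja : olo - 1 < 7 := by omega
  set ja : Fin 7 := ⟨olo - 1, hja⟩ with hjadef
  have hjav : (ja : ℕ) = olo - 1 := rfl
  have key : ∀ (o1 : Option Bool) (y r : Fin 7 → Bool),
      Oeq olo olo (fun _ => o1) y r ↔ obs y r ja = o1 := by
    intro o1 y r
    constructor
    · intro h
      exact h ja (by omega) (by omega)
    · intro ha j hj1 hj2
      have hje : j = ja := Fin.ext (show j.1 = olo - 1 by omega)
      rw [hje, ha]
  unfold S1 J7
  calc (∑ o1 : Option Bool,
        Pr M.p (fun y r => Yeq ylo yhi yv y r ∧ Oeq olo olo (fun _ => o1) y r))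
      = ∑ o1 : Option Bool,
        Pr M.p (fun y r => Yeq ylo yhi yv y r ∧ obs y r ja = o1) := by
        refine Finset.sum_congr rfl fun o1 _ => Pr_congr M.p fun y r => ?_
        have := key o1 y r
        tauto
    _ = Pr M.p (Yeq ylo yhi yv) := collapse M.p _ (fun y r => obs y r ja)
    _ = W M ylo yhi yv := PrYeq M ylo yhi yv

/-- Worked example, `K = 7`, `m = 2`: full-data identification formula.
Under the `m`th-order Markov model with `K = 7` and `m = 2` together with the exponential
tilting restriction, for all `(y₁, …, y₇) ∈ {0,1}⁷`,
`f(Y₁, …, Y₇)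
  = [Σ_{o₂,o₃,o₄} f(Y₁,O₂,O₃,O₄)]
    × [Σ_{o₃,o₄,o₅} f(Y₁,Y₂,O₃,O₄,O₅)] / [Σ_{y₂'} Σ_{o₃,o₄,o₅} f(Y₁,Y₂,O₃,O₄,O₅)]
    × [Σ_{o₄,o₅,o₆} f(Y₁,Y₂,Y₃,O₄,O₅,O₆)] / [Σ_{y₃'} Σ_{o₄,o₅,o₆} f(Y₁,Y₂,Y₃,O₄,O₅,O₆)]
    × [Σ_{o₅,o₆,o₇} f(Y₂,Y₃,Y₄,O₅,O₆,O₇)] / [Σ_{y₄'} Σ_{o₅,o₆,o₇} f(Y₂,Y₃,Y₄,O₅,O₆,O₇)]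
    × [Σ_{o₆,o₇} f(Y₃,Y₄,Y₅,O₆,O₇)] / [Σ_{y₅'} Σ_{o₆,o₇} f(Y₃,Y₄,Y₅,O₆,O₇)]
    × [Σ_{o₇} f(Y₄,Y₅,Y₆,O₇)] / [Σ_{y₆'} Σ_{o₇} f(Y₄,Y₅,Y₆,O₇)]
    × f(Y₅,Y₆,Y₇) / [Σ_{y₇'} f(Y₅,Y₆,Y₇)]`. -/
theorem statement16 (M : Markov 7 2) (α : ℕ → ℝ) (hT : Tilt M.p 2 α) (yv : ℕ → Bool) :
    Pr M.p (fun y _ => ∀ j : Fin 7, y j = yv (j.1 + 1))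
      = S3 M 1 1 2 yv
        * (S3 M 1 2 3 yv / ∑ v : Bool, S3 M 1 2 3 (Function.update yv 2 v))
        * (S3 M 1 3 4 yv / ∑ v : Bool, S3 M 1 3 4 (Function.update yv 3 v))
        * (S3 M 2 4 5 yv / ∑ v : Bool, S3 M 2 4 5 (Function.update yv 4 v))
        * (S2 M 3 5 6 yv / ∑ v : Bool, S2 M 3 5 6 (Function.update yv 5 v))
        * (S1 M 4 6 7 yv / ∑ v : Bool, S1 M 4 6 7 (Function.update yv 6 v))
        * (Pr M.p (Yeq 5 7 yv) /
            ∑ v : Bool, Pr M.p (Yeq 5 7 (Function.update yv 7 v))) := by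
  -- left-hand side
  have hL : Pr M.p (fun y _ => ∀ j : Fin 7, y j = yv (j.1 + 1)) = W M 1 7 yv := by
    have h1 : Pr M.p (fun y _ => ∀ j : Fin 7, y j = yv (j.1 + 1))
        = Pr M.p (Yeq 1 7 yv) := by
      refine Pr_congr M.p fun y r => ?_
      constructor
      · intro h j _ _
        exact h j
      · intro h j
        exact h j (by omega) (by omega)
    rw [h1, PrYeq]
  -- numerators
  have n1 : S3 M 1 1 2 yv = W M 1 1 yv := S3W M 1 1 2 (by norm_num) (by norm_num) yv
  have n2 : S3 M 1 2 3 yv = W M 1 2 yv := S3W M 1 2 3 (by norm_num) (by norm_num) yv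
  have n3 : S3 M 1 3 4 yv = W M 1 3 yv := S3W M 1 3 4 (by norm_num) (by norm_num) yv
  have n4 : S3 M 2 4 5 yv = W M 2 4 yv := S3W M 2 4 5 (by norm_num) (by norm_num) yv
  have n5 : S2 M 3 5 6 yv = W M 3 5 yv := S2W M 3 5 6 (by norm_num) (by norm_num) yv
  have n6 : S1 M 4 6 7 yv = W M 4 6 yv := S1W M 4 6 7 (by norm_num) (by norm_num) yv
  have n7 : Pr M.p (Yeq 5 7 yv) = W M 5 7 yv := PrYeq M 5 7 yv
  -- denominators
  have d2 : (∑ v : Bool, S3 M 1 2 3 (Function.update yv 2 v)) = W M 1 1 yv := by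
    calc (∑ v : Bool, S3 M 1 2 3 (Function.update yv 2 v))
        = ∑ v : Bool, W M 1 2 (Function.update yv 2 v) :=
          Finset.sum_congr rfl fun v _ => S3W M 1 2 3 (by norm_num) (by norm_num) _
      _ = W M 1 1 yv := by
          have := W_margin M 1 1 (by norm_num) (by norm_num) yv
          norm_num at this ⊢
          exact this
  have d3 : (∑ v : Bool, S3 M 1 3 4 (Function.update yv 3 v)) = W M 1 2 yv := by
    calc (∑ v : Bool, S3 M 1 3 4 (Function.update yv 3 v))
        = ∑ v : Bool, W M 1 3 (Function.update yv 3 v) :=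
          Finset.sum_congr rfl fun v _ => S3W M 1 3 4 (by norm_num) (by norm_num) _
      _ = W M 1 2 yv := by
          have := W_margin M 1 2 (by norm_num) (by norm_num) yv
          norm_num at this ⊢
          exact this
  have d4 : (∑ v : Bool, S3 M 2 4 5 (Function.update yv 4 v)) = W M 2 3 yv := by
    calc (∑ v : Bool, S3 M 2 4 5 (Function.update yv 4 v))
        = ∑ v : Bool, W M 2 4 (Function.update yv 4 v) :=
          Finset.sum_congr rfl fun v _ => S3W M 2 4 5 (by norm_num) (by norm_num) _
      _ = W M 2 3 yv := by
          have := W_margin M 2 3 (by norm_num) (by norm_num) yv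
          norm_num at this ⊢
          exact this
  have d5 : (∑ v : Bool, S2 M 3 5 6 (Function.update yv 5 v)) = W M 3 4 yv := by
    calc (∑ v : Bool, S2 M 3 5 6 (Function.update yv 5 v))
        = ∑ v : Bool, W M 3 5 (Function.update yv 5 v) :=
          Finset.sum_congr rfl fun v _ => S2W M 3 5 6 (by norm_num) (by norm_num) _
      _ = W M 3 4 yv := by
          have := W_margin M 3 4 (by norm_num) (by norm_num) yv
          norm_num at this ⊢
          exact this
  have d6 : (∑ v : Bool, S1 M 4 6 7 (Function.update yv 6 v)) = W M 4 5 yv := by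
    calc (∑ v : Bool, S1 M 4 6 7 (Function.update yv 6 v))
        = ∑ v : Bool, W M 4 6 (Function.update yv 6 v) :=
          Finset.sum_congr rfl fun v _ => S1W M 4 6 7 (by norm_num) (by norm_num) _
      _ = W M 4 5 yv := by
          have := W_margin M 4 5 (by norm_num) (by norm_num) yv
          norm_num at this ⊢
          exact this
  have d7 : (∑ v : Bool, Pr M.p (Yeq 5 7 (Function.update yv 7 v))) = W M 5 6 yv := by
    calc (∑ v : Bool, Pr M.p (Yeq 5 7 (Function.update yv 7 v)))
        = ∑ v : Bool, W M 5 7 (Function.update yv 7 v) :=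
          Finset.sum_congr rfl fun v _ => PrYeq M 5 7 _
      _ = W M 5 6 yv := by
          have := W_margin M 5 6 (by norm_num) (by norm_num) yv
          norm_num at this ⊢
          exact this
  rw [hL, n1, n2, n3, n4, n5, n6, n7, d2, d3, d4, d5, d6, d7]
  -- cross identities
  have e4 : W M 1 4 yv * W M 2 3 yv = W M 1 3 yv * W M 2 4 yv := by
    have := cross M yv 1 2 (le_refl 1) (by norm_num) (by norm_num)
    norm_num at this
    exact this
  have e5 : W M 1 5 yv * W M 3 4 yv = W M 1 4 yv * W M 3 5 yv := by
    have := cross M yv 1 3 (le_refl 1) (by norm_num) (by norm_num)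
    norm_num at this
    exact this
  have e6 : W M 1 6 yv * W M 4 5 yv = W M 1 5 yv * W M 4 6 yv := by
    have := cross M yv 1 4 (le_refl 1) (by norm_num) (by norm_num)
    norm_num at this
    exact this
  have e7 : W M 1 7 yv * W M 5 6 yv = W M 1 6 yv * W M 5 7 yv := by
    have := cross M yv 1 5 (le_refl 1) (by norm_num) (by norm_num)
    norm_num at this
    exact this
  have p11 := (W_pos M 1 1 yv).ne'
  have p12 := (W_pos M 1 2 yv).ne'
  have p23 := (W_pos M 2 3 yv).ne'
  have p34 := (W_pos M 3 4 yv).ne'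
  have p45 := (W_pos M 4 5 yv).ne'
  have p56 := (W_pos M 5 6 yv).ne'
  have p14 := (W_pos M 1 4 yv).ne'
  have p15 := (W_pos M 1 5 yv).ne'
  have p16 := (W_pos M 1 6 yv).ne'
  field_simp
  linear_combination (W M 3 5 yv * W M 4 6 yv * W M 5 7 yv) * e4
    + (W M 2 3 yv * W M 4 6 yv * W M 5 7 yv) * e5
    + (W M 2 3 yv * W M 3 4 yv * W M 5 7 yv) * e6
    + (W M 2 3 yv * W M 3 4 yv * W M 4 5 yv) * e7

end MRM
end
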